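/- arXiv:1809.08900 — 4 statements merged into one kernel-verified Lean document; each statement's English description precedes it below -/
import Mathlib

section
/- Let G and H be nontrivial graphs such that neither G nor H belongs to the class 𝒢. Then edim(G ∨ H) = |V(G)| + |V(H)| - 2. -/
open SimpleGraph

variable {V W : Type*}

/-- Distance (in `ℕ∞`) from a vertex to an edge: the minimum of the distances
to the two endpoints. -/
noncomputable def edgeDist (G : SimpleGraph V) (v : V) (e : Sym2 V) : ℕ∞ :=
  Sym2.lift ⟨fun a b => min (G.edist v a) (G.edist v b),
    fun a b => min_comm _ _⟩ e

/-- A set of vertices is an edge metric generator if every pair of distinct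
edges is distinguished by some vertex of the set. -/
def IsEdgeMetricGenerator (G : SimpleGraph V) (S : Set V) : Prop :=
  ∀ e₁ ∈ G.edgeSet, ∀ e₂ ∈ G.edgeSet, e₁ ≠ e₂ →
    ∃ w ∈ S, edgeDist G w e₁ ≠ edgeDist G w e₂

/-- The edge metric dimension: minimum cardinality of an edge metric generator. -/
noncomputable def edim (G : SimpleGraph V) : ℕ :=
  sInf {n | ∃ S : Set V, S.ncard = n ∧ IsEdgeMetricGenerator G S}


/-- The join of two graphs: disjoint union plus all edges across. -/
def joinGraph (G : SimpleGraph V) (H : SimpleGraph W) : SimpleGraph (V ⊕ W) where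
  Adj x y := match x, y with
    | .inl a, .inl b => G.Adj a b
    | .inr a, .inr b => H.Adj a b
    | .inl _, .inr _ => True
    | .inr _, .inl _ => True
  symm := by constructor; rintro (a | a) (b | b) h <;> simp_all [SimpleGraph.adj_comm]
  loopless := by
    constructor
    rintro (a | a) h
    · exact G.loopless.irrefl a h
    · exact H.loopless.irrefl a h

/-- A total dominating set: every vertex has a neighbor in the set. -/
def IsTotalDomSet (G : SimpleGraph V) (D : Set V) : Prop :=
  ∀ v : V, ∃ d ∈ D, G.Adj v d

/-- The total domination number. -/
noncomputable def totalDomNum (G : SimpleGraph V) : ℕ :=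
  sInf {n | ∃ D : Set V, D.ncard = n ∧ IsTotalDomSet G D}

/-- The class 𝒢: for every vertex `u` there is a neighbor `v`
such that `{u, v}` is a minimum total dominating set. -/
def InClassG (G : SimpleGraph V) : Prop :=
  ∀ u : V, ∃ v : V, G.Adj u v ∧ IsTotalDomSet G {u, v} ∧
    ({u, v} : Set V).ncard = totalDomNum G

/-- Lexicographic product `G[H]`. -/
def lexProd (G : SimpleGraph V) (H : SimpleGraph W) : SimpleGraph (V × W) where
  Adj x y := G.Adj x.1 y.1 ∨ (x.1 = y.1 ∧ H.Adj x.2 y.2)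
  symm := by constructor; rintro ⟨g, h⟩ ⟨g', h'⟩ (hadj | ⟨rfl, hadj⟩)
             · exact Or.inl hadj.symm
             · exact Or.inr ⟨rfl, hadj.symm⟩
  loopless := by constructor; rintro ⟨g, h⟩ (hadj | ⟨-, hadj⟩)
                 · exact G.loopless.irrefl g hadj
                 · exact H.loopless.irrefl h hadj

/-- Corona product `G ⊙ H`: vertex `(g, none)` is the vertex `g` of `G`, and
`(g, some h)` is the vertex `h` of the copy of `H` attached to `g`. -/
def corona (G : SimpleGraph V) (H : SimpleGraph W) : SimpleGraph (V × Option W) where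
  Adj x y := match x, y with
    | (g, none), (g', none) => G.Adj g g'
    | (g, none), (g', some _) => g = g'
    | (g, some _), (g', none) => g = g'
    | (g, some h), (g', some h') => g = g' ∧ H.Adj h h'
  symm := by constructor; rintro ⟨g, (_ | h)⟩ ⟨g', (_ | h')⟩ hadj <;>
             simp_all [SimpleGraph.adj_comm, eq_comm]
  loopless := by constructor; rintro ⟨g, (_ | h)⟩ hadj <;> simp_all

/-- The closed neighborhood of a vertex. -/
def closedNbhd (G : SimpleGraph V) (u : V) : Set V :=
  insert u (G.neighborSet u)

/-- `u` and `v` are false twins: equal open neighborhoods. -/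
def FalseTwin (G : SimpleGraph V) (u v : V) : Prop :=
  G.neighborSet u = G.neighborSet v

/-- `u` and `v` are true twins: equal closed neighborhoods. -/
def TrueTwin (G : SimpleGraph V) (u v : V) : Prop :=
  closedNbhd G u = closedNbhd G v

/-- The union of the closed neighborhoods of the two endpoints of an edge. -/
def edgeNbhd (G : SimpleGraph V) : Sym2 V → Set V :=
  Sym2.lift ⟨fun a b => closedNbhd G a ∪ closedNbhd G b, fun _ _ => Set.union_comm _ _⟩

/-- Two edges are twin edges: `N[u] ∪ N[v] = N[x] ∪ N[y]`. -/
def TwinEdges (G : SimpleGraph V) (e f : Sym2 V) : Prop :=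
  edgeNbhd G e = edgeNbhd G f

/-- The set of edges lying in nontrivial edge-twin classes. -/
def nontrivTwinEdges (G : SimpleGraph V) : Set (Sym2 V) :=
  {e ∈ G.edgeSet | ∃ f ∈ G.edgeSet, f ≠ e ∧ TwinEdges G e f}

/-- `q(G)`: the number of edges lying in nontrivial edge-twin classes. -/
noncomputable def qval (G : SimpleGraph V) : ℕ := (nontrivTwinEdges G).ncard

/-- `q'(G) = q(G) - m`, where `m` is the number of nontrivial edge-twin classes. -/
noncomputable def q'val (G : SimpleGraph V) : ℕ :=
  qval G - (edgeNbhd G '' nontrivTwinEdges G).ncard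

/-- The set of vertices lying in nontrivial false-twin classes. -/
def nontrivFalseTwins (G : SimpleGraph V) : Set V :=
  {v | ∃ u, u ≠ v ∧ FalseTwin G u v}

/-- The set of vertices lying in nontrivial true-twin classes. -/
def nontrivTrueTwins (G : SimpleGraph V) : Set V :=
  {v | ∃ u, u ≠ v ∧ TrueTwin G u v}

/-- `f'(G) = f(G) - k`: vertices in nontrivial false-twin classes minus the
number of such classes. -/
noncomputable def f'val (G : SimpleGraph V) : ℕ :=
  (nontrivFalseTwins G).ncard - (G.neighborSet '' nontrivFalseTwins G).ncard

/-- `t'(G) = t(G) - ℓ`: vertices in nontrivial true-twin classes minus the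
number of such classes. -/
noncomputable def t'val (G : SimpleGraph V) : ℕ :=
  (nontrivTrueTwins G).ncard - (closedNbhd G '' nontrivTrueTwins G).ncard

/-- A set of representatives for the twin deletion operation: it contains
exactly one vertex from each (false- or true-) twin equivalence class. -/
def IsTwinDeletionSet (G : SimpleGraph V) (R : Set V) : Prop :=
  ∀ v : V, ∃! r : V, r ∈ R ∧ (FalseTwin G v r ∨ TrueTwin G v r)


section EdimJoinAux

variable {V W : Type*}

lemma myMin_eq_zero {a b : ℕ∞} : min a b = 0 ↔ a = 0 ∨ b = 0 := by
  rw [show (0:ℕ∞) = ⊥ from rfl, min_eq_bot]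

lemma edgeDist_pair {X : Type*} (G : SimpleGraph X) (v a b : X) :
    edgeDist G v s(a,b) = min (G.edist v a) (G.edist v b) := rfl

lemma edgeDist_eq_zero_iff {X : Type*} (G : SimpleGraph X) (v a b : X) :
    edgeDist G v s(a,b) = 0 ↔ v = a ∨ v = b := by
  rw [edgeDist_pair, myMin_eq_zero, edist_eq_zero_iff (G := G), edist_eq_zero_iff (G := G)]

lemma edgeDist_eq_one {X : Type*} (G : SimpleGraph X) {v a b : X} (ha : v ≠ a) (hb : v ≠ b)
    (h : G.Adj v a ∨ G.Adj v b) : edgeDist G v s(a,b) = 1 := by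
  rw [edgeDist_pair]
  rcases h with h | h
  · rw [(edist_eq_one_iff_adj (G := G)).mpr h]
    exact min_eq_left (ENat.one_le_iff_ne_zero.mpr
      (fun h0 => hb ((edist_eq_zero_iff (G := G)).mp h0)))
  · rw [(edist_eq_one_iff_adj (G := G)).mpr h]
    exact min_eq_right (ENat.one_le_iff_ne_zero.mpr
      (fun h0 => ha ((edist_eq_zero_iff (G := G)).mp h0)))

lemma edgeDist_ne_one {X : Type*} (G : SimpleGraph X) {v a b : X}
    (ha : ¬ G.Adj v a) (hb : ¬ G.Adj v b) : edgeDist G v s(a,b) ≠ 1 := by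
  rw [edgeDist_pair]
  rcases min_choice (G.edist v a) (G.edist v b) with h | h <;> rw [h]
  · exact fun h1 => ha ((edist_eq_one_iff_adj (G := G)).mp h1)
  · exact fun h1 => hb ((edist_eq_one_iff_adj (G := G)).mp h1)

lemma edgeDist_mem_ne {X : Type*} (G : SimpleGraph X) {v a b c d : X}
    (h1 : v = a ∨ v = b) (h2 : v ≠ c) (h3 : v ≠ d) :
    edgeDist G v s(a,b) ≠ edgeDist G v s(c,d) := by
  rw [(edgeDist_eq_zero_iff G v a b).mpr h1]
  intro h
  rcases (edgeDist_eq_zero_iff G v c d).mp h.symm with h | h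
  · exact h2 h
  · exact h3 h


lemma joinAdj_lr (G : SimpleGraph V) (H : SimpleGraph W) (a : V) (b : W) :
    (joinGraph G H).Adj (Sum.inl a) (Sum.inr b) := trivial

lemma joinAdj_rl (G : SimpleGraph V) (H : SimpleGraph W) (b : W) (a : V) :
    (joinGraph G H).Adj (Sum.inr b) (Sum.inl a) := trivial

lemma exists_bad_vertex {X : Type*} [Fintype X] (K : SimpleGraph X) (hX : 2 ≤ Fintype.card X)
    (h : ¬ InClassG K) :
    ∃ u : X, ∀ c : X, K.Adj u c →
      ∃ x : X, x ≠ u ∧ x ≠ c ∧ ¬ K.Adj x u ∧ ¬ K.Adj x c := by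
  have hne : Nonempty X := Fintype.card_pos_iff.mp (by omega)
  rw [InClassG] at h
  push_neg at h
  obtain ⟨u, hu⟩ := h
  refine ⟨u, fun c hadj => ?_⟩
  by_contra hc
  push_neg at hc
  have hdom : IsTotalDomSet K {u, c} := by
    intro x
    by_cases hxu : K.Adj x u
    · exact ⟨u, by simp, hxu⟩
    · by_cases hxc : K.Adj x c
      · exact ⟨c, by simp, hxc⟩
      · exfalso
        rcases eq_or_ne x u with rfl | h1
        · exact hxc hadj
        · rcases eq_or_ne x c with rfl | h2
          · exact hxu hadj.symm
          · exact hxc (hc x h1 h2 hxu)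
  have hcard : ({u, c} : Set X).ncard = 2 := Set.ncard_pair hadj.ne
  have hlow : ∀ n ∈ {n | ∃ D : Set X, D.ncard = n ∧ IsTotalDomSet K D}, 2 ≤ n := by
    rintro n ⟨D, rfl, hD⟩
    by_contra hn
    push_neg at hn
    interval_cases h : D.ncard
    · have : D = ∅ := (Set.ncard_eq_zero (Set.toFinite D)).mp h
      obtain ⟨x⟩ := hne
      obtain ⟨d, hd, -⟩ := hD x
      simp [this] at hd
    · obtain ⟨d, rfl⟩ := Set.ncard_eq_one.mp h
      obtain ⟨d', hd', hadj'⟩ := hD d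
      simp only [Set.mem_singleton_iff] at hd'
      exact K.loopless.irrefl d (hd' ▸ hadj')
  have htdn : totalDomNum K = 2 := by
    have hmem : 2 ∈ {n | ∃ D : Set X, D.ncard = n ∧ IsTotalDomSet K D} :=
      ⟨{u, c}, hcard, hdom⟩
    exact le_antisymm (Nat.sInf_le hmem) (hlow _ (Nat.sInf_mem ⟨2, hmem⟩))
  exact hu c hadj hdom (hcard.trans htdn.symm)

lemma ncard_le_one_of_subsingleton {X : Type*} {s : Set X} (h : s.Subsingleton) :
    s.ncard ≤ 1 := by
  rcases h.eq_empty_or_singleton with rfl | ⟨a, rfl⟩ <;> simp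

/-- Lower bound: any edge metric generator of the join misses at most one vertex
on each side. -/
lemma join_gen_lower [Fintype V] [Fintype W] (G : SimpleGraph V) (H : SimpleGraph W)
    (hG : 2 ≤ Fintype.card V) (hH : 2 ≤ Fintype.card W) {S : Set (V ⊕ W)}
    (hS : IsEdgeMetricGenerator (joinGraph G H) S) :
    Fintype.card V + Fintype.card W - 2 ≤ S.ncard := by
  obtain ⟨v0⟩ : Nonempty V := Fintype.card_pos_iff.mp (by omega)
  obtain ⟨w0⟩ : Nonempty W := Fintype.card_pos_iff.mp (by omega)
  set J := joinGraph G H with hJ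
  have hA : {a : V | Sum.inl a ∉ S}.Subsingleton := by
    intro x hx y hy
    by_contra hxy
    have he1 : s(Sum.inl x, (Sum.inr w0 : V ⊕ W)) ∈ J.edgeSet := J.mem_edgeSet.mpr trivial
    have he2 : s(Sum.inl y, (Sum.inr w0 : V ⊕ W)) ∈ J.edgeSet := J.mem_edgeSet.mpr trivial
    have hne12 : s(Sum.inl x, (Sum.inr w0 : V ⊕ W)) ≠ s(Sum.inl y, (Sum.inr w0 : V ⊕ W)) := by
      simp [Sym2.eq_iff, hxy]
    obtain ⟨w, hwS, hne⟩ := hS _ he1 _ he2 hne12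
    apply hne
    rcases w with z | z
    · have hzx : (Sum.inl z : V ⊕ W) ≠ Sum.inl x := fun h => hx (h ▸ hwS)
      have hzy : (Sum.inl z : V ⊕ W) ≠ Sum.inl y := fun h => hy (h ▸ hwS)
      rw [edgeDist_eq_one J hzx (by simp) (Or.inr (joinAdj_lr G H _ _)),
        edgeDist_eq_one J hzy (by simp) (Or.inr (joinAdj_lr G H _ _))]
    · rcases eq_or_ne z w0 with rfl | hz
      · rw [(edgeDist_eq_zero_iff J _ _ _).mpr (Or.inr rfl),
          (edgeDist_eq_zero_iff J _ _ _).mpr (Or.inr rfl)]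
      · rw [edgeDist_eq_one J (by simp) (by simp [hz]) (Or.inl (joinAdj_rl G H _ _)),
          edgeDist_eq_one J (by simp) (by simp [hz]) (Or.inl (joinAdj_rl G H _ _))]
  have hB : {b : W | Sum.inr b ∉ S}.Subsingleton := by
    intro x hx y hy
    by_contra hxy
    have he1 : s((Sum.inl v0 : V ⊕ W), Sum.inr x) ∈ J.edgeSet := J.mem_edgeSet.mpr trivial
    have he2 : s((Sum.inl v0 : V ⊕ W), Sum.inr y) ∈ J.edgeSet := J.mem_edgeSet.mpr trivial
    have hne12 : s((Sum.inl v0 : V ⊕ W), Sum.inr x) ≠ s((Sum.inl v0 : V ⊕ W), Sum.inr y) := by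
      simp [Sym2.eq_iff, hxy]
    obtain ⟨w, hwS, hne⟩ := hS _ he1 _ he2 hne12
    apply hne
    rcases w with z | z
    · rcases eq_or_ne z v0 with rfl | hz
      · rw [(edgeDist_eq_zero_iff J _ _ _).mpr (Or.inl rfl),
          (edgeDist_eq_zero_iff J _ _ _).mpr (Or.inl rfl)]
      · rw [edgeDist_eq_one J (by simp [hz]) (by simp) (Or.inr (joinAdj_lr G H _ _)),
          edgeDist_eq_one J (by simp [hz]) (by simp) (Or.inr (joinAdj_lr G H _ _))]
    · have hzx : (Sum.inr z : V ⊕ W) ≠ Sum.inr x := fun h => hx (h ▸ hwS)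
      have hzy : (Sum.inr z : V ⊕ W) ≠ Sum.inr y := fun h => hy (h ▸ hwS)
      rw [edgeDist_eq_one J (by simp) hzx (Or.inl (joinAdj_rl G H _ _)),
        edgeDist_eq_one J (by simp) hzy (Or.inl (joinAdj_rl G H _ _))]
  have hsub : Sᶜ ⊆ (Sum.inl '' {a : V | Sum.inl a ∉ S}) ∪ (Sum.inr '' {b : W | Sum.inr b ∉ S}) := by
    rintro (a | b) h
    · exact Or.inl ⟨a, h, rfl⟩
    · exact Or.inr ⟨b, h, rfl⟩
  have hc2 : Sᶜ.ncard ≤ 2 := by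
    calc Sᶜ.ncard ≤ ((Sum.inl '' {a : V | Sum.inl a ∉ S}) ∪
        (Sum.inr '' {b : W | Sum.inr b ∉ S})).ncard :=
          Set.ncard_le_ncard hsub (Set.toFinite _)
      _ ≤ (Sum.inl '' {a : V | Sum.inl a ∉ S}).ncard +
          (Sum.inr '' {b : W | Sum.inr b ∉ S}).ncard := Set.ncard_union_le _ _
      _ ≤ 1 + 1 := Nat.add_le_add (ncard_le_one_of_subsingleton (hA.image _))
          (ncard_le_one_of_subsingleton (hB.image _))
  have htot : S.ncard + Sᶜ.ncard = Fintype.card V + Fintype.card W := by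
    rw [Set.ncard_add_ncard_compl, Nat.card_eq_fintype_card, Fintype.card_sum]
  omega

lemma core (G : SimpleGraph V) (H : SimpleGraph W) {g0 : V} {h0 : W}
    (hg0 : ∀ c, G.Adj g0 c → ∃ x, x ≠ g0 ∧ x ≠ c ∧ ¬ G.Adj x g0 ∧ ¬ G.Adj x c)
    (hh0 : ∀ c, H.Adj h0 c → ∃ y, y ≠ h0 ∧ y ≠ c ∧ ¬ H.Adj y h0 ∧ ¬ H.Adj y c)
    (z : V ⊕ W)
    (he1 : (joinGraph G H).Adj (Sum.inl g0) z)
    (he2 : (joinGraph G H).Adj (Sum.inr h0) z) :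
    ∃ w ∈ ({Sum.inl g0, Sum.inr h0}ᶜ : Set (V ⊕ W)),
      edgeDist (joinGraph G H) w s(Sum.inl g0, z) ≠
        edgeDist (joinGraph G H) w s(Sum.inr h0, z) := by
  rcases z with c | c
  · obtain ⟨x, hx1, hx2, hx3, hx4⟩ := hg0 c he1
    refine ⟨Sum.inl x, by simp [hx1], ?_⟩
    rw [edgeDist_eq_one (joinGraph G H) (by simp) (by simp [hx2])
        (Or.inl (joinAdj_lr G H x h0))]
    exact edgeDist_ne_one (joinGraph G H) hx3 hx4
  · obtain ⟨y, hy1, hy2, hy3, hy4⟩ := hh0 c he2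
    refine ⟨Sum.inr y, by simp [hy1], ?_⟩
    rw [edgeDist_eq_one (joinGraph G H) (by simp) (by simp [hy2])
        (Or.inl (joinAdj_rl G H y g0))]
    exact (edgeDist_ne_one (joinGraph G H) (v := Sum.inr y) (a := Sum.inr h0)
      (b := Sum.inr c) hy3 hy4).symm

lemma endgame (G : SimpleGraph V) (H : SimpleGraph W) {g0 : V} {h0 : W}
    (hg0 : ∀ c, G.Adj g0 c → ∃ x, x ≠ g0 ∧ x ≠ c ∧ ¬ G.Adj x g0 ∧ ¬ G.Adj x c)
    (hh0 : ∀ c, H.Adj h0 c → ∃ y, y ≠ h0 ∧ y ≠ c ∧ ¬ H.Adj y h0 ∧ ¬ H.Adj y c)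
    (p q r s : V ⊕ W)
    (hpq : (joinGraph G H).Adj p q) (hrs : (joinGraph G H).Adj r s)
    (hne : s(p,q) ≠ s(r,s))
    (hpT : p = Sum.inl g0 ∨ p = Sum.inr h0)
    (hq : q = r ∨ q = s ∨ (q = Sum.inl g0 ∨ q = Sum.inr h0))
    (hr : r = p ∨ r = q ∨ (r = Sum.inl g0 ∨ r = Sum.inr h0))
    (hs : s = p ∨ s = q ∨ (s = Sum.inl g0 ∨ s = Sum.inr h0)) :
    ∃ w ∈ ({Sum.inl g0, Sum.inr h0}ᶜ : Set (V ⊕ W)),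
      edgeDist (joinGraph G H) w s(p,q) ≠ edgeDist (joinGraph G H) w s(r,s) := by
  rcases hq with rfl | rfl | hqT
  · -- q = r, e2 = s(q, s)
    have hsp : s ≠ p := by
      intro h
      exact hne (by rw [h]; exact Sym2.eq_swap)
    have hsq : s ≠ q := hrs.ne'
    rcases hs with h | h | hsT
    · exact absurd h hsp
    · exact absurd h hsq
    rcases hpT with rfl | rfl <;> rcases hsT with rfl | rfl
    · exact absurd rfl hsp
    · obtain ⟨w, hw, hd⟩ := core G H hg0 hh0 q hpq hrs.symm
      refine ⟨w, hw, ?_⟩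
      rw [show s(q, (Sum.inr h0 : V ⊕ W)) = s(Sum.inr h0, q) from Sym2.eq_swap]
      exact hd
    · obtain ⟨w, hw, hd⟩ := core G H hg0 hh0 q hrs.symm hpq
      refine ⟨w, hw, ?_⟩
      rw [show s(q, (Sum.inl g0 : V ⊕ W)) = s(Sum.inl g0, q) from Sym2.eq_swap]
      exact hd.symm
    · exact absurd rfl hsp
  · -- q = s, e2 = s(r, q)
    have hrp : r ≠ p := by
      intro h
      exact hne (by rw [h])
    have hrq : r ≠ q := hrs.ne
    rcases hr with h | h | hrT
    · exact absurd h hrp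
    · exact absurd h hrq
    rcases hpT with rfl | rfl <;> rcases hrT with rfl | rfl
    · exact absurd rfl hrp
    · exact core G H hg0 hh0 q hpq hrs
    · obtain ⟨w, hw, hd⟩ := core G H hg0 hh0 q hrs hpq
      exact ⟨w, hw, hd.symm⟩
    · exact absurd rfl hrp
  · -- q ∈ T, so {p, q} = T and r, s ∈ {p, q}: contradiction
    have hr' : r = p ∨ r = q := by
      rcases hr with h | h | h
      · exact Or.inl h
      · exact Or.inr h
      rcases h with rfl | rfl
      · rcases hpT with hp' | hp'
        · exact Or.inl hp'.symm
        · rcases hqT with hq' | hq'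
          · exact Or.inr hq'.symm
          · exact absurd (hp'.trans hq'.symm) hpq.ne
      · rcases hpT with hp' | hp'
        · rcases hqT with hq' | hq'
          · exact absurd (hp'.trans hq'.symm) hpq.ne
          · exact Or.inr hq'.symm
        · exact Or.inl hp'.symm
    have hs' : s = p ∨ s = q := by
      rcases hs with h | h | h
      · exact Or.inl h
      · exact Or.inr h
      rcases h with rfl | rfl
      · rcases hpT with hp' | hp'
        · exact Or.inl hp'.symm
        · rcases hqT with hq' | hq'
          · exact Or.inr hq'.symm
          · exact absurd (hp'.trans hq'.symm) hpq.ne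
      · rcases hpT with hp' | hp'
        · rcases hqT with hq' | hq'
          · exact absurd (hp'.trans hq'.symm) hpq.ne
          · exact Or.inr hq'.symm
        · exact Or.inl hp'.symm
    exfalso
    rcases hr' with rfl | rfl <;> rcases hs' with rfl | rfl
    · exact hrs.ne rfl
    · exact hne rfl
    · exact hne (by rw [show s(r,s) = s(s,r) from Sym2.eq_swap])
    · exact hrs.ne rfl

lemma join_gen_upper (G : SimpleGraph V) (H : SimpleGraph W) {g0 : V} {h0 : W}
    (hg0 : ∀ c, G.Adj g0 c → ∃ x, x ≠ g0 ∧ x ≠ c ∧ ¬ G.Adj x g0 ∧ ¬ G.Adj x c)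
    (hh0 : ∀ c, H.Adj h0 c → ∃ y, y ≠ h0 ∧ y ≠ c ∧ ¬ H.Adj y h0 ∧ ¬ H.Adj y c) :
    IsEdgeMetricGenerator (joinGraph G H)
      ({Sum.inl g0, Sum.inr h0}ᶜ : Set (V ⊕ W)) := by
  intro e1 he1 e2 he2 hne
  induction e1 using Sym2.ind with | _ p q =>
  induction e2 using Sym2.ind with | _ r s =>
  rw [SimpleGraph.mem_edgeSet] at he1 he2
  by_cases hp : p ≠ r ∧ p ≠ s ∧ (p ≠ Sum.inl g0 ∧ p ≠ Sum.inr h0)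
  · exact ⟨p, by simp [hp.2.2.1, hp.2.2.2],
      edgeDist_mem_ne _ (Or.inl rfl) hp.1 hp.2.1⟩
  by_cases hq : q ≠ r ∧ q ≠ s ∧ (q ≠ Sum.inl g0 ∧ q ≠ Sum.inr h0)
  · exact ⟨q, by simp [hq.2.2.1, hq.2.2.2],
      edgeDist_mem_ne _ (Or.inr rfl) hq.1 hq.2.1⟩
  by_cases hr : r ≠ p ∧ r ≠ q ∧ (r ≠ Sum.inl g0 ∧ r ≠ Sum.inr h0)
  · exact ⟨r, by simp [hr.2.2.1, hr.2.2.2],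
      (edgeDist_mem_ne _ (Or.inl rfl) hr.1 hr.2.1).symm⟩
  by_cases hs : s ≠ p ∧ s ≠ q ∧ (s ≠ Sum.inl g0 ∧ s ≠ Sum.inr h0)
  · exact ⟨s, by simp [hs.2.2.1, hs.2.2.2],
      (edgeDist_mem_ne _ (Or.inr rfl) hs.1 hs.2.1).symm⟩
  push_neg at hp hq hr hs
  have hpd : p = r ∨ p = s ∨ (p = Sum.inl g0 ∨ p = Sum.inr h0) := by
    by_cases h1 : p = r
    · exact Or.inl h1
    by_cases h2 : p = s
    · exact Or.inr (Or.inl h2)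
    by_cases h3 : p = Sum.inl g0
    · exact Or.inr (Or.inr (Or.inl h3))
    exact Or.inr (Or.inr (Or.inr (hp h1 h2 h3)))
  have hqd : q = r ∨ q = s ∨ (q = Sum.inl g0 ∨ q = Sum.inr h0) := by
    by_cases h1 : q = r
    · exact Or.inl h1
    by_cases h2 : q = s
    · exact Or.inr (Or.inl h2)
    by_cases h3 : q = Sum.inl g0
    · exact Or.inr (Or.inr (Or.inl h3))
    exact Or.inr (Or.inr (Or.inr (hq h1 h2 h3)))
  have hrd : r = p ∨ r = q ∨ (r = Sum.inl g0 ∨ r = Sum.inr h0) := by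
    by_cases h1 : r = p
    · exact Or.inl h1
    by_cases h2 : r = q
    · exact Or.inr (Or.inl h2)
    by_cases h3 : r = Sum.inl g0
    · exact Or.inr (Or.inr (Or.inl h3))
    exact Or.inr (Or.inr (Or.inr (hr h1 h2 h3)))
  have hsd : s = p ∨ s = q ∨ (s = Sum.inl g0 ∨ s = Sum.inr h0) := by
    by_cases h1 : s = p
    · exact Or.inl h1
    by_cases h2 : s = q
    · exact Or.inr (Or.inl h2)
    by_cases h3 : s = Sum.inl g0
    · exact Or.inr (Or.inr (Or.inl h3))
    exact Or.inr (Or.inr (Or.inr (hs h1 h2 h3)))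
  have hpqne : p ≠ q := he1.ne
  by_cases hpfree : p ≠ r ∧ p ≠ s
  · exact endgame G H hg0 hh0 p q r s he1 he2 hne
      ((hpd.resolve_left hpfree.1).resolve_left hpfree.2) hqd hrd hsd
  by_cases hqfree : q ≠ r ∧ q ≠ s
  · rw [show s(p,q) = s(q,p) from Sym2.eq_swap]
    refine endgame G H hg0 hh0 q p r s he1.symm he2 ?_
      ((hqd.resolve_left hqfree.1).resolve_left hqfree.2) hpd ?_ ?_
    · intro h
      exact hne (Sym2.eq_swap.trans h)
    · rcases hrd with h | h | h
      exacts [Or.inr (Or.inl h), Or.inl h, Or.inr (Or.inr h)]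
    · rcases hsd with h | h | h
      exacts [Or.inr (Or.inl h), Or.inl h, Or.inr (Or.inr h)]
  · push_neg at hpfree hqfree
    exfalso
    rcases eq_or_ne p r with hpr | hpr
    · have hqr : q ≠ r := fun h => hpqne (hpr.trans h.symm)
      have hqs : q = s := hqfree hqr
      exact hne (by rw [hpr, hqs])
    · have hps : p = s := hpfree hpr
      have hqs : q ≠ s := fun h => hpqne (hps.trans h.symm)
      have hqr : q = r := by
        by_contra h
        exact hqs (hqfree h)
      exact hne (by rw [hps, hqr]; exact Sym2.eq_swap)

end EdimJoinAux


theorem edim_join_of_not_classG {V W : Type*} [Fintype V] [Fintype W]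
    (G : SimpleGraph V) (H : SimpleGraph W)
    (hG : 2 ≤ Fintype.card V) (hH : 2 ≤ Fintype.card W)
    (hGc : ¬ InClassG G) (hHc : ¬ InClassG H) :
    edim (joinGraph G H) = Fintype.card V + Fintype.card W - 2 := by
  obtain ⟨g0, hg0⟩ := exists_bad_vertex G hG hGc
  obtain ⟨h0, hh0⟩ := exists_bad_vertex H hH hHc
  have hTcard : ({Sum.inl g0, Sum.inr h0} : Set (V ⊕ W)).ncard = 2 :=
    Set.ncard_pair (by simp)
  have htot : ({Sum.inl g0, Sum.inr h0} : Set (V ⊕ W)).ncard +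
      ({Sum.inl g0, Sum.inr h0}ᶜ : Set (V ⊕ W)).ncard =
      Fintype.card V + Fintype.card W := by
    rw [Set.ncard_add_ncard_compl, Nat.card_eq_fintype_card, Fintype.card_sum]
  have hScard : ({Sum.inl g0, Sum.inr h0}ᶜ : Set (V ⊕ W)).ncard =
      Fintype.card V + Fintype.card W - 2 := by omega
  have hmem : Fintype.card V + Fintype.card W - 2 ∈
      {n | ∃ S : Set (V ⊕ W), S.ncard = n ∧ IsEdgeMetricGenerator (joinGraph G H) S} :=
    ⟨_, hScard, join_gen_upper G H hg0 hh0⟩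
  unfold edim
  refine le_antisymm (Nat.sInf_le hmem) ?_
  obtain ⟨S, hSc, hSgen⟩ := Nat.sInf_mem (⟨_, hmem⟩ : Set.Nonempty _)
  rw [← hSc]
  exact join_gen_lower G H hG hH hSgen
end

section
/- Let G and H be graphs where the twin-deletion operation is applied to G in two possibly different ways: G' and G'' are each obtained from G by deleting all but one vertex from every nontrivial equivalence class of the false-twin relation and of the true-twin relation. Then the number q of edges in nontrivial edge-twin equivalence classes and the quantity q' (that number minus the number of such classes) agree: q(G') = q(G'') and q'(G') = q'(G''). -/
open SimpleGraph

variable {V W : Type*}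

-- auxiliary
section Aux
variable {A B : Type*}

def TwinRel (G : SimpleGraph A) (u v : A) : Prop := FalseTwin G u v ∨ TrueTwin G u v

lemma TwinRel.refl (G : SimpleGraph A) (u : A) : TwinRel G u u := Or.inl rfl

lemma TwinRel.symm {G : SimpleGraph A} {u v : A} (h : TwinRel G u v) : TwinRel G v u := by
  cases h with
  | inl h => exact Or.inl (Eq.symm h)
  | inr h => exact Or.inr (Eq.symm h)

lemma twin_adj {G : SimpleGraph A} {a b w : A} (h : TwinRel G a b) (hw : G.Adj a w) :
    G.Adj b w ∨ b = w := by
  cases h with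
  | inl h =>
    left
    have hm : w ∈ G.neighborSet a := hw
    rw [h] at hm; exact hm
  | inr h =>
    have hm : w ∈ closedNbhd G a := Set.mem_insert_of_mem _ hw
    rw [h] at hm
    rcases Set.mem_insert_iff.mp hm with h1 | h2
    · exact Or.inr h1.symm
    · exact Or.inl h2

lemma twinrel_trans_ft_tt {G : SimpleGraph A} {u v w : A}
    (h1 : FalseTwin G u v) (h2 : TrueTwin G v w) : TwinRel G u w := by
  by_cases huv : u = v
  · subst huv; exact Or.inr h2
  by_cases hvw : v = w
  · subst hvw; exact Or.inl h1
  by_cases huw : u = w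
  · subst huw; exact TwinRel.refl G u
  exfalso
  have hwv : w ∈ closedNbhd G v := by rw [h2]; exact Set.mem_insert _ _
  have hadjvw : G.Adj v w := by
    rcases Set.mem_insert_iff.mp hwv with h | h
    · exact absurd h.symm hvw
    · exact h
  have hwu : w ∈ G.neighborSet u := by rw [h1]; exact hadjvw
  have hu : u ∈ closedNbhd G w := Set.mem_insert_of_mem _ (G.adj_symm hwu)
  rw [← h2] at hu
  rcases Set.mem_insert_iff.mp hu with h | h
  · exact huv h
  · rw [← h1] at h; exact G.loopless.irrefl u h

lemma TwinRel.trans {G : SimpleGraph A} {u v w : A}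
    (h1 : TwinRel G u v) (h2 : TwinRel G v w) : TwinRel G u w := by
  cases h1 with
  | inl h1 =>
    cases h2 with
    | inl h2 => exact Or.inl (h1.trans h2)
    | inr h2 => exact twinrel_trans_ft_tt h1 h2
  | inr h1 =>
    cases h2 with
    | inl h2 => exact (twinrel_trans_ft_tt (Eq.symm h2) (Eq.symm h1)).symm
    | inr h2 => exact Or.inr (h1.trans h2)

end Aux

section IsoInv
variable {A B : Type*} {G : SimpleGraph A} {G' : SimpleGraph B}

lemma iso_closedNbhd (e : G ≃g G') (u : A) :
    closedNbhd G' (e u) = ⇑e '' closedNbhd G u := by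
  ext b
  obtain ⟨a, rfl⟩ := e.surjective b
  simp only [closedNbhd, Set.mem_insert_iff, SimpleGraph.mem_neighborSet,
    e.injective.mem_set_image, e.map_adj_iff, e.injective.eq_iff]

lemma iso_edgeNbhd (e : G ≃g G') (f : Sym2 A) :
    edgeNbhd G' (Sym2.map e f) = ⇑e '' edgeNbhd G f := by
  induction f using Sym2.ind with
  | _ a b =>
    simp only [Sym2.map_pair_eq, edgeNbhd, Sym2.lift_mk, Set.image_union, iso_closedNbhd e]

lemma iso_twinEdges (e : G ≃g G') (f₁ f₂ : Sym2 A) :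
    TwinEdges G' (Sym2.map e f₁) (Sym2.map e f₂) ↔ TwinEdges G f₁ f₂ := by
  unfold TwinEdges
  rw [iso_edgeNbhd, iso_edgeNbhd]
  exact Set.image_eq_image e.injective

lemma sym2_map_surj (e : G ≃g G') : Function.Surjective (Sym2.map (e : A → B)) := by
  intro f'
  induction f' using Sym2.ind with
  | _ a b => exact ⟨s(e.symm a, e.symm b), by simp⟩

lemma iso_nontriv (e : G ≃g G') :
    nontrivTwinEdges G' = Sym2.map ⇑e '' nontrivTwinEdges G := by
  ext f'
  constructor
  · rintro ⟨hmem, g', hg'mem, hne, htw⟩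
    obtain ⟨f, rfl⟩ := sym2_map_surj e f'
    obtain ⟨g, rfl⟩ := sym2_map_surj e g'
    refine ⟨f, ⟨e.map_mem_edgeSet_iff.mp hmem, g, e.map_mem_edgeSet_iff.mp hg'mem,
      fun h => hne (by rw [h]), (iso_twinEdges e f g).mp htw⟩, rfl⟩
  · rintro ⟨f, ⟨hmem, g, hgmem, hne, htw⟩, rfl⟩
    exact ⟨e.map_mem_edgeSet_iff.mpr hmem, Sym2.map ⇑e g, e.map_mem_edgeSet_iff.mpr hgmem,
      fun h => hne (Sym2.map.injective e.injective h), (iso_twinEdges e f g).mpr htw⟩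

lemma iso_qval (e : G ≃g G') : qval G' = qval G := by
  unfold qval
  rw [iso_nontriv e, Set.ncard_image_of_injective _ (Sym2.map.injective e.injective)]

lemma iso_q'val (e : G ≃g G') : q'val G' = q'val G := by
  unfold q'val
  rw [iso_qval e]
  congr 1
  rw [iso_nontriv e, ← Set.image_comp]
  have h : edgeNbhd G' ∘ Sym2.map ⇑e = Set.image ⇑e ∘ edgeNbhd G := by
    funext f; exact iso_edgeNbhd e f
  rw [h, Set.image_comp,
    Set.ncard_image_of_injective _ (Set.image_injective.mpr e.injective)]

end IsoInv

section Rep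
variable {A : Type*} {G : SimpleGraph A} {R R' : Set A}

noncomputable def twinRep (h : IsTwinDeletionSet G R) (v : A) : A := (h v).choose

lemma twinRep_mem (h : IsTwinDeletionSet G R) (v : A) : twinRep h v ∈ R :=
  (h v).choose_spec.1.1

lemma twinRep_twin (h : IsTwinDeletionSet G R) (v : A) : TwinRel G v (twinRep h v) :=
  (h v).choose_spec.1.2

lemma twinRep_unique (h : IsTwinDeletionSet G R) {v y : A} (hy : y ∈ R)
    (ht : TwinRel G v y) : y = twinRep h v :=
  (h v).choose_spec.2 y ⟨hy, ht⟩

lemma twin_eq_of_mem (h : IsTwinDeletionSet G R) {r s : A} (hr : r ∈ R) (hs : s ∈ R)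
    (ht : TwinRel G r s) : r = s := by
  rw [twinRep_unique h hr (TwinRel.refl G r), twinRep_unique h hs ht]

lemma twin_adj_iff' {a a' b b' : A}
    (ha : TwinRel G a a') (hb : TwinRel G b b')
    (hab : ¬ TwinRel G a b) (hab' : a' ≠ b') :
    G.Adj a b → G.Adj a' b' := by
  intro h
  rcases twin_adj ha h with h1 | h1
  · rcases twin_adj hb h1.symm with h2 | h2
    · exact h2.symm
    · exact absurd h2.symm hab'
  · exact absurd (h1 ▸ ha) hab

noncomputable def twinIso (G : SimpleGraph A)
    (hR : IsTwinDeletionSet G R) (hR' : IsTwinDeletionSet G R') :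
    (G.induce R) ≃g (G.induce R') where
  toFun r := ⟨twinRep hR' r, twinRep_mem hR' r⟩
  invFun r := ⟨twinRep hR r, twinRep_mem hR r⟩
  left_inv := by
    rintro ⟨r, hr⟩
    ext
    exact (twinRep_unique hR hr (twinRep_twin hR' r).symm).symm
  right_inv := by
    rintro ⟨r, hr⟩
    ext
    exact (twinRep_unique hR' hr (twinRep_twin hR r).symm).symm
  map_rel_iff' := by
    rintro ⟨r, hr⟩ ⟨s, hs⟩
    show G.Adj (twinRep hR' r) (twinRep hR' s) ↔ G.Adj r s
    constructor
    · intro h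
      refine twin_adj_iff' (twinRep_twin hR' r).symm (twinRep_twin hR' s).symm ?_ ?_ h
      · intro htw
        have hrs : TwinRel G r s :=
          ((twinRep_twin hR' r).trans htw).trans (twinRep_twin hR' s).symm
        exact h.ne (by rw [twin_eq_of_mem hR hr hs hrs])
      · intro hrs
        subst hrs
        exact h.ne rfl
    · intro h
      refine twin_adj_iff' (twinRep_twin hR' r) (twinRep_twin hR' s) ?_ ?_ h
      · intro hrs
        exact h.ne (twin_eq_of_mem hR hr hs hrs)
      · intro heq
        have hrs : TwinRel G r s :=
          ((twinRep_twin hR' r).trans (heq ▸ TwinRel.refl G _)).trans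
            (twinRep_twin hR' s).symm
        exact h.ne (twin_eq_of_mem hR hr hs hrs)

end Rep


theorem q_invariant_under_twin_deletion {V : Type*} (G : SimpleGraph V)
    (R R' : Set V) (hR : IsTwinDeletionSet G R) (hR' : IsTwinDeletionSet G R') :
    qval (G.induce R) = qval (G.induce R') ∧
    q'val (G.induce R) = q'val (G.induce R') := by
  have e := twinIso G hR hR'
  exact ⟨(iso_qval e).symm, (iso_q'val e).symm⟩
end

section
/- For any connected graph G, edim(G ⊙ K_1) ≥ edim(G), where G ⊙ K_1 is the corona of G with the one-vertex graph (i.e., attaching a pendant vertex to every vertex of G). -/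
open SimpleGraph

variable {V W : Type*}

section Aux

variable {V : Type*} (G : SimpleGraph V)

private abbrev Cor (G : SimpleGraph V) : SimpleGraph (V × Option (Fin 1)) :=
  corona G (⊥ : SimpleGraph (Fin 1))

private lemma corona_walk_lower {x y : V × Option (Fin 1)} (p : (Cor G).Walk x y) :
    G.edist x.1 y.1 ≤ p.length := by
  induction p with
  | nil => simp [SimpleGraph.edist_self]
  | @cons u z w h p ih =>
    obtain ⟨a, oa⟩ := u
    obtain ⟨c, oc⟩ := z
    have hlen : ((SimpleGraph.Walk.cons h p).length : ℕ∞) = p.length + 1 := by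
      simp [SimpleGraph.Walk.length_cons]
    rw [hlen]
    match oa, oc, h with
    | none, none, h =>
      have hac : G.Adj a c := h
      calc G.edist a w.1 ≤ G.edist a c + G.edist c w.1 := SimpleGraph.edist_triangle
        _ ≤ 1 + p.length := by
            refine add_le_add ((SimpleGraph.edist_le hac.toWalk).trans ?_) ih
            simp
        _ = p.length + 1 := add_comm _ _
    | none, some _, h =>
      have : a = c := h
      subst this
      exact le_trans ih (le_add_right le_rfl)
    | some _, none, h =>
      have : a = c := h
      subst this
      exact le_trans ih (le_add_right le_rfl)
    | some _, some _, h => exact absurd h.2 (by simp)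

private def coronaHom (G : SimpleGraph V) : G →g Cor G :=
  ⟨fun g => (g, none), fun {_ _} h => h⟩

private lemma corona_edist_none (a b : V) :
    (Cor G).edist (a, none) (b, none) = G.edist a b := by
  apply le_antisymm
  · apply le_sInf
    rintro _ ⟨p, rfl⟩
    have := SimpleGraph.edist_le (p.map (coronaHom G))
    simp only [SimpleGraph.Walk.length_map] at this
    exact this
  · apply le_sInf
    rintro _ ⟨p, rfl⟩
    exact corona_walk_lower G p

private lemma corona_edist_some (a b : V) (h : Fin 1) :
    (Cor G).edist (a, some h) (b, none) = G.edist a b + 1 := by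
  apply le_antisymm
  · calc (Cor G).edist (a, some h) (b, none)
        ≤ (Cor G).edist (a, some h) (a, none) + (Cor G).edist (a, none) (b, none) :=
          SimpleGraph.edist_triangle
      _ = 1 + G.edist a b := by
          rw [corona_edist_none]
          congr 1
          exact SimpleGraph.edist_eq_one_iff_adj.mpr rfl
      _ = G.edist a b + 1 := add_comm _ _
  · apply le_sInf
    rintro _ ⟨p, rfl⟩
    cases p with
    | cons hadj q =>
      rename_i z
      obtain ⟨c, oc⟩ := z
      match oc, hadj with
      | none, hadj =>
        have hac : a = c := hadj
        subst hac
        have := corona_walk_lower G q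
        have hlen : ((SimpleGraph.Walk.cons hadj q).length : ℕ∞) = q.length + 1 := by
          simp [SimpleGraph.Walk.length_cons]
        show G.edist a b + 1 ≤ ((SimpleGraph.Walk.cons hadj q).length : ℕ∞)
        rw [hlen]
        exact add_le_add_left this 1
      | some _, hadj => exact absurd hadj.2 (by simp)

private lemma edgeDist_corona (w : V) (o : Option (Fin 1)) (e : Sym2 V) :
    edgeDist (Cor G) (w, o) (Sym2.map (fun v => (v, none)) e) =
      (if o = none then 0 else 1) + edgeDist G w e := by
  induction e with
  | _ a b =>
    rw [Sym2.map_pair_eq]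
    cases o with
    | none =>
      simp only [edgeDist, Sym2.lift_mk, corona_edist_none]
      simp
    | some h =>
      simp only [edgeDist, Sym2.lift_mk, corona_edist_some, reduceIte]
      rw [min_add_add_right, add_comm]
      simp

private lemma edgeDist_eq_zero_iff_s14 (H : SimpleGraph V) (x : V) (e : Sym2 V) :
    edgeDist H x e = 0 ↔ x ∈ e := by
  induction e with
  | _ a b =>
    simp only [edgeDist, Sym2.lift_mk, Sym2.mem_iff]
    constructor
    · intro h
      rcases min_le_iff.mp h.le with h' | h' <;>
        [left; right] <;>
        exact SimpleGraph.edist_eq_zero_iff.mp (le_antisymm h' zero_le)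
    · rintro (rfl | rfl) <;> simp [SimpleGraph.edist_self]

private lemma univ_isEdgeMetricGenerator (H : SimpleGraph V) :
    IsEdgeMetricGenerator H Set.univ := by
  intro e₁ _ e₂ _ hne
  by_contra hcon
  push_neg at hcon
  apply hne
  apply Sym2.ext
  intro x
  have := hcon x (Set.mem_univ x)
  rw [← edgeDist_eq_zero_iff_s14 H x e₁, ← edgeDist_eq_zero_iff_s14 H x e₂, this]

end Aux


theorem edim_le_edim_corona_K1 {V : Type*} [Fintype V] (G : SimpleGraph V)
    (hG : G.Connected) :
    edim G ≤ edim (corona G (⊥ : SimpleGraph (Fin 1))) := by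
  classical
  set C := corona G (⊥ : SimpleGraph (Fin 1)) with hC
  have hne : {n | ∃ S : Set (V × Option (Fin 1)), S.ncard = n ∧ IsEdgeMetricGenerator C S}.Nonempty :=
    ⟨(Set.univ : Set (V × Option (Fin 1))).ncard, Set.univ, rfl, univ_isEdgeMetricGenerator C⟩
  obtain ⟨S', hScard, hSgen⟩ : ∃ S' : Set (V × Option (Fin 1)),
      S'.ncard = edim C ∧ IsEdgeMetricGenerator C S' := Nat.sInf_mem hne
  set S : Set V := Prod.fst '' S' with hS
  have hmapmem : ∀ e ∈ G.edgeSet, (Sym2.map (fun v => (v, none)) e) ∈ C.edgeSet := by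
    intro e he
    induction e with
    | _ a b =>
      rw [Sym2.map_pair_eq]
      exact he
  have hgenG : IsEdgeMetricGenerator G S := by
    intro e₁ he₁ e₂ he₂ hne'
    have hinj : Function.Injective (fun v : V => (v, (none : Option (Fin 1)))) := by
      intro a b h
      simpa using h
    obtain ⟨w', hw'S, hw'⟩ := hSgen _ (hmapmem e₁ he₁) _ (hmapmem e₂ he₂)
      (fun h => hne' (Sym2.map.injective hinj h))
    refine ⟨w'.1, ⟨w', hw'S, rfl⟩, ?_⟩
    intro heq
    apply hw'
    obtain ⟨w, o⟩ := w'
    rw [edgeDist_corona, edgeDist_corona, heq]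
  have h1 : edim G ≤ S.ncard := Nat.sInf_le ⟨S, rfl, hgenG⟩
  have h2 : S.ncard ≤ S'.ncard := Set.ncard_image_le S'.toFinite
  omega
end

section
/- For the complete graph K_n with n ≥ 3, edim(K_n ⊙ K_1) = edim(K_n) = n - 1. -/
open SimpleGraph

variable {V W : Type*}

section EdimHelpers

open SimpleGraph

lemma two_le_edist' {V : Type*} (G : SimpleGraph V) (u v : V) (h1 : u ≠ v) (h2 : ¬ G.Adj u v) :
    2 ≤ G.edist u v := by
  by_contra h
  push_neg at h
  have hne : G.edist u v ≠ ⊤ := (h.trans_le le_top).ne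
  lift G.edist u v to ℕ using hne with k hk
  have hk2 : k < 2 := by exact_mod_cast h
  interval_cases k
  · exact h1 (edist_eq_zero_iff.mp (by exact_mod_cast hk.symm))
  · exact h2 (edist_eq_one_iff_adj.mp (by exact_mod_cast hk.symm))

lemma one_le_edist' {V : Type*} (G : SimpleGraph V) (u v : V) (h1 : u ≠ v) :
    1 ≤ G.edist u v :=
  Order.one_le_iff_pos.mpr (G.edist_pos_of_ne h1)

lemma edist_iso_le' {V W : Type*} (G : SimpleGraph V) (H : SimpleGraph W) (φ : G ≃g H)
    (u v : V) : H.edist (φ u) (φ v) ≤ G.edist u v := by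
  rcases eq_or_ne (G.edist u v) ⊤ with h | h
  · simp [h]
  · obtain ⟨p, hp⟩ := SimpleGraph.exists_walk_of_edist_ne_top h
    rw [← hp]
    calc H.edist (φ u) (φ v) ≤ (p.map φ.toHom).length := SimpleGraph.edist_le _
      _ = p.length := by rw [SimpleGraph.Walk.length_map]

lemma edist_iso' {V W : Type*} {G : SimpleGraph V} {H : SimpleGraph W} (φ : G ≃g H) (u v : V) :
    H.edist (φ u) (φ v) = G.edist u v := by
  refine le_antisymm (edist_iso_le' G H φ u v) ?_
  have := edist_iso_le' H G φ.symm (φ u) (φ v)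
  simpa using this

/-- pick an element `≠ 0` in the symmetric difference of two distinct pairs -/
lemma exists_distinguisher {n : ℕ} (z i j k l : Fin n) (hij : i ≠ j) (hkl : k ≠ l)
    (hne : s(i,j) ≠ s(k,l)) :
    ∃ p : Fin n, p ≠ z ∧ (((p = i ∨ p = j) ∧ ¬(p = k ∨ p = l)) ∨
      ((p = k ∨ p = l) ∧ ¬(p = i ∨ p = j))) := by
  classical
  set A : Finset (Fin n) := {i, j} with hA
  set B : Finset (Fin n) := {k, l} with hB
  have cA : A.card = 2 := by
    rw [hA, Finset.card_insert_of_notMem (by simp [hij]), Finset.card_singleton]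
  have cB : B.card = 2 := by
    rw [hB, Finset.card_insert_of_notMem (by simp [hkl]), Finset.card_singleton]
  have hAB : A ≠ B := by
    intro h
    have hiB : i ∈ B := h ▸ (by simp [hA])
    have hjB : j ∈ B := h ▸ (by simp [hA])
    simp only [hB, Finset.mem_insert, Finset.mem_singleton] at hiB hjB
    apply hne
    rw [Sym2.eq_iff]
    rcases hiB with rfl | rfl <;> rcases hjB with rfl | rfl <;> tauto
  have h1 : (A \ B).Nonempty := by
    rw [Finset.sdiff_nonempty]
    intro hsub
    exact hAB (Finset.eq_of_subset_of_card_le hsub (by omega))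
  have h2 : (B \ A).Nonempty := by
    rw [Finset.sdiff_nonempty]
    intro hsub
    exact hAB (Finset.eq_of_subset_of_card_le hsub (by omega)).symm
  obtain ⟨a, ha⟩ := h1
  obtain ⟨b, hb⟩ := h2
  rw [Finset.mem_sdiff] at ha hb
  have memA : ∀ x : Fin n, x ∈ A ↔ (x = i ∨ x = j) := by
    intro x; simp [hA]
  have memB : ∀ x : Fin n, x ∈ B ↔ (x = k ∨ x = l) := by
    intro x; simp [hB]
  by_cases ha0 : a = z
  · -- then b ≠ 0 since a ≠ b
    have hab : a ≠ b := fun h => hb.2 (h ▸ ha.1)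
    refine ⟨b, fun h => hab (by rw [ha0, h]), Or.inr ⟨(memB b).mp hb.1, ?_⟩⟩
    rw [← memA b]; exact hb.2
  · refine ⟨a, ha0, Or.inl ⟨(memA a).mp ha.1, ?_⟩⟩
    rw [← memB a]; exact ha.2

lemma ncard_ne_elt {n : ℕ} (z : Fin n) : ({i : Fin n | i ≠ z}).ncard = n - 1 := by
  have h : {i : Fin n | i ≠ z} = Set.univ \ {z} := by
    ext x; simp
  rw [h, Set.ncard_diff (Set.subset_univ _), Set.ncard_univ, Set.ncard_singleton,
    Nat.card_eq_fintype_card, Fintype.card_fin]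

lemma edim_top_fin (n : ℕ) (hn : 3 ≤ n) : edim (⊤ : SimpleGraph (Fin n)) = n - 1 := by
  have hnpos : 0 < n := by omega
  let z0 : Fin n := ⟨0, hnpos⟩
  have hedist : ∀ w a : Fin n, (⊤ : SimpleGraph (Fin n)).edist w a = if w = a then 0 else 1 := by
    intro w a
    split
    · next h => rw [h, SimpleGraph.edist_self]
    · next h => exact SimpleGraph.edist_top_of_ne h
  have hED : ∀ w a b : Fin n,
      edgeDist (⊤ : SimpleGraph (Fin n)) w s(a,b) =
        min (if w = a then 0 else 1) (if w = b then 0 else 1) := by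
    intro w a b
    show min _ _ = _
    rw [hedist, hedist]
  have hgen0 : IsEdgeMetricGenerator (⊤ : SimpleGraph (Fin n)) {i : Fin n | i ≠ z0} := by
    intro e1 he1 e2 he2 hne
    induction e1 using Sym2.ind with
    | _ i j =>
    induction e2 using Sym2.ind with
    | _ k l =>
    rw [SimpleGraph.mem_edgeSet, top_adj] at he1 he2
    obtain ⟨p, hp0, hp⟩ := exists_distinguisher z0 i j k l he1 he2 hne
    refine ⟨p, hp0, ?_⟩
    rw [hED, hED]
    rcases hp with ⟨hin, hout⟩ | ⟨hin, hout⟩ <;>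
      [skip; rw [ne_comm]] <;>
    · push_neg at hout
      rcases hin with rfl | rfl <;>
        simp [hout.1, hout.2, (show (0:ℕ∞) ≠ 1 by norm_num)]
  have hmem : n - 1 ∈ {m | ∃ S : Set (Fin n), S.ncard = m ∧
      IsEdgeMetricGenerator (⊤ : SimpleGraph (Fin n)) S} :=
    ⟨{i : Fin n | i ≠ z0}, ncard_ne_elt z0, hgen0⟩
  apply le_antisymm (Nat.sInf_le hmem)
  apply le_csInf ⟨_, hmem⟩
  rintro m ⟨S, rfl, hgen⟩
  by_contra hlt
  push_neg at hlt
  have hcompl : 1 < Sᶜ.ncard := by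
    have := Set.ncard_add_ncard_compl S
    rw [Nat.card_eq_fintype_card, Fintype.card_fin] at this
    omega
  obtain ⟨x, y, hx, hy, hxy⟩ := (Set.one_lt_ncard_iff (Set.toFinite _)).mp hcompl
  have hz : ∃ z : Fin n, z ≠ x ∧ z ≠ y := by
    have hcard : ({x, y} : Finset (Fin n))ᶜ.Nonempty := by
      rw [← Finset.card_pos, Finset.card_compl]
      have h2 : ({x, y} : Finset (Fin n)).card ≤ 2 :=
        Finset.card_insert_le _ _ |>.trans (by simp)
      have := Fintype.card_fin n
      omega
    obtain ⟨z, hz⟩ := hcard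
    rw [Finset.mem_compl, Finset.mem_insert] at hz
    push_neg at hz
    exact ⟨z, hz.1, by simpa using hz.2⟩
  obtain ⟨z, hzx, hzy⟩ := hz
  have he1 : s(x, z) ∈ (⊤ : SimpleGraph (Fin n)).edgeSet := by
    rw [SimpleGraph.mem_edgeSet, top_adj]; exact hzx.symm
  have he2 : s(y, z) ∈ (⊤ : SimpleGraph (Fin n)).edgeSet := by
    rw [SimpleGraph.mem_edgeSet, top_adj]; exact hzy.symm
  have hnee : s(x, z) ≠ s(y, z) := by
    intro h
    rcases Sym2.eq_iff.mp h with ⟨h1, -⟩ | ⟨-, h2⟩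
    · exact hxy h1
    · exact hzy h2
  obtain ⟨w, hw, hwd⟩ := hgen _ he1 _ he2 hnee
  apply hwd
  have hwx : w ≠ x := fun h => hx (h ▸ hw)
  have hwy : w ≠ y := fun h => hy (h ▸ hw)
  rw [hED, hED, if_neg hwx, if_neg hwy]

end EdimHelpers


section CoronaHelpers

open SimpleGraph

/-- The corona `K_n ⊙ K_1`. -/
private abbrev Cg (n : ℕ) : SimpleGraph (Fin n × Option (Fin 1)) :=
  corona (⊤ : SimpleGraph (Fin n)) (⊥ : SimpleGraph (Fin 1))

variable {n : ℕ}

lemma cadj_cc (i j : Fin n) : (Cg n).Adj (i, none) (j, none) ↔ i ≠ j := Iff.rfl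

lemma cadj_cp (i j : Fin n) (a : Fin 1) : (Cg n).Adj (i, none) (j, some a) ↔ i = j := Iff.rfl

lemma cadj_pc (i j : Fin n) (a : Fin 1) : (Cg n).Adj (i, some a) (j, none) ↔ i = j := Iff.rfl

lemma cadj_pp (i j : Fin n) (a b : Fin 1) : ¬ (Cg n).Adj (i, some a) (j, some b) :=
  fun h => h.2

lemma ed_self_pc (p : Fin n) (a : Fin 1) : (Cg n).edist (p, some a) (p, none) = 1 :=
  SimpleGraph.edist_eq_one_iff_adj.mpr rfl

lemma ed_pc (p i : Fin n) (a : Fin 1) (hpi : p ≠ i) :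
    2 ≤ (Cg n).edist (p, some a) (i, none) :=
  two_le_edist' _ _ _ (by simp) (fun h => hpi ((cadj_pc p i a).mp h))

lemma ed_pp (p i : Fin n) (a b : Fin 1) (hpi : p ≠ i) :
    2 ≤ (Cg n).edist (p, some a) (i, some b) :=
  two_le_edist' _ _ _ (by simp [hpi]) (cadj_pp p i a b)

lemma EDcc_one_le (p : Fin n) (a : Fin 1) (i j : Fin n) :
    1 ≤ edgeDist (Cg n) (p, some a) s((i,(none : Option (Fin 1))),(j,none)) :=
  le_min (one_le_edist' _ _ _ (by simp)) (one_le_edist' _ _ _ (by simp))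

lemma EDcc_mem (p i j : Fin n) (hp : p = i ∨ p = j) :
    edgeDist (Cg n) (p, some 0) s((i,(none : Option (Fin 1))),(j,none)) = 1 := by
  show min _ _ = 1
  rcases hp with rfl | rfl
  · rw [ed_self_pc, min_eq_left (one_le_edist' _ _ _ (by simp))]
  · rw [ed_self_pc, min_eq_right (one_le_edist' _ _ _ (by simp))]

lemma EDcc_two_le (p i j : Fin n) (hpi : p ≠ i) (hpj : p ≠ j) :
    2 ≤ edgeDist (Cg n) (p, some 0) s((i,(none : Option (Fin 1))),(j,none)) :=
  le_min (ed_pc p i 0 hpi) (ed_pc p j 0 hpj)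

lemma EDpend_zero (p : Fin n) :
    edgeDist (Cg n) (p, some 0) s((p,(none : Option (Fin 1))),(p,some 0)) = 0 := by
  show min _ _ = 0
  rw [SimpleGraph.edist_self, min_eq_right zero_le]

lemma EDpend_two_le (p k : Fin n) (hpk : p ≠ k) :
    2 ≤ edgeDist (Cg n) (p, some 0) s((k,(none : Option (Fin 1))),(k,some 0)) :=
  le_min (ed_pc p k 0 hpk) (ed_pp p k 0 0 hpk)

lemma EDpend_one_le (p : Fin n) (a : Fin 1) (k : Fin n) (hpk : p ≠ k) :
    1 ≤ edgeDist (Cg n) (p, some a) s((k,(none : Option (Fin 1))),(k,some 0)) :=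
  le_min (one_le_edist' _ _ _ (by simp)) (one_le_edist' _ _ _ (by simp [hpk]))

lemma corona_edge_cases (e : Sym2 (Fin n × Option (Fin 1))) (he : e ∈ (Cg n).edgeSet) :
    (∃ i j : Fin n, i ≠ j ∧ e = s((i,(none : Option (Fin 1))),(j,none))) ∨
    (∃ i : Fin n, e = s((i,(none : Option (Fin 1))),(i,some 0))) := by
  induction e using Sym2.ind with
  | _ u v =>
  rw [SimpleGraph.mem_edgeSet] at he
  obtain ⟨i, _ | a⟩ := u <;> obtain ⟨j, _ | b⟩ := v
  · exact Or.inl ⟨i, j, he, rfl⟩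
  · have hij : i = j := he
    subst hij
    exact Or.inr ⟨i, by rw [Subsingleton.elim b 0]⟩
  · have hij : i = j := he
    subst hij
    exact Or.inr ⟨i, by rw [Sym2.eq_swap, Subsingleton.elim a 0]⟩
  · exact absurd he (cadj_pp i j a b)

lemma edim_corona_fin (n : ℕ) (hn : 3 ≤ n) : edim (Cg n) = n - 1 := by
  have hnpos : 0 < n := by omega
  let z0 : Fin n := ⟨0, hnpos⟩
  set S : Set (Fin n × Option (Fin 1)) :=
    (fun i : Fin n => ((i, some 0) : Fin n × Option (Fin 1))) '' {i | i ≠ z0} with hS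
  have hinj : Function.Injective (fun i : Fin n => ((i, some 0) : Fin n × Option (Fin 1))) :=
    fun a b h => congrArg Prod.fst h
  have hScard : S.ncard = n - 1 := by
    rw [hS, Set.ncard_image_of_injective _ hinj, ncard_ne_elt z0]
  have hSgen : IsEdgeMetricGenerator (Cg n) S := by
    have key1 : ∀ i j k : Fin n, i ≠ j → ∃ w ∈ S,
        edgeDist (Cg n) w s((i,(none : Option (Fin 1))),(j,none)) ≠
        edgeDist (Cg n) w s((k,(none : Option (Fin 1))),(k,some 0)) := by
      intro i j k hij
      by_cases hk : k = z0
      · subst hk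
        obtain ⟨p, hpz, hpin⟩ : ∃ p, p ≠ z0 ∧ (p = i ∨ p = j) := by
          by_cases hi : i = z0
          · exact ⟨j, fun h => hij (by rw [hi, h]), Or.inr rfl⟩
          · exact ⟨i, hi, Or.inl rfl⟩
        refine ⟨(p, some 0), ⟨p, hpz, rfl⟩, ?_⟩
        rw [EDcc_mem _ _ _ hpin]
        intro h
        have h2 := EDpend_two_le p z0 hpz
        rw [← h] at h2
        norm_num at h2
      · refine ⟨(k, some 0), ⟨k, hk, rfl⟩, ?_⟩
        rw [ne_comm, EDpend_zero]
        intro h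
        have h2 := EDcc_one_le k 0 i j
        rw [← h] at h2
        norm_num at h2
    have key2 : ∀ i k : Fin n, i ≠ k → i ≠ z0 → ∃ w ∈ S,
        edgeDist (Cg n) w s((i,(none : Option (Fin 1))),(i,some 0)) ≠
        edgeDist (Cg n) w s((k,(none : Option (Fin 1))),(k,some 0)) := by
      intro i k hik hiz
      refine ⟨(i, some 0), ⟨i, hiz, rfl⟩, ?_⟩
      rw [EDpend_zero]
      intro h
      have h2 := EDpend_two_le i k hik
      rw [← h] at h2
      norm_num at h2
    intro e1 he1 e2 he2 hne
    rcases corona_edge_cases e1 he1 with ⟨i, j, hij, rfl⟩ | ⟨i, rfl⟩ <;>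
      rcases corona_edge_cases e2 he2 with ⟨k, l, hkl, rfl⟩ | ⟨k, rfl⟩
    · -- core-core vs core-core
      have hs : s(i,j) ≠ s(k,l) := by
        intro h
        apply hne
        rcases Sym2.eq_iff.mp h with ⟨rfl, rfl⟩ | ⟨rfl, rfl⟩
        · rfl
        · exact Sym2.eq_swap
      obtain ⟨p, hp0, hp⟩ := exists_distinguisher z0 i j k l hij hkl hs
      refine ⟨(p, some 0), ⟨p, hp0, rfl⟩, ?_⟩
      rcases hp with ⟨hin, hout⟩ | ⟨hin, hout⟩ <;> [skip; rw [ne_comm]] <;>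
      · push_neg at hout
        rw [EDcc_mem _ _ _ hin]
        intro h
        have h2 := EDcc_two_le _ _ _ hout.1 hout.2
        rw [← h] at h2
        norm_num at h2
    · exact key1 i j k hij
    · obtain ⟨w, hw, hd⟩ := key1 k l i hkl
      exact ⟨w, hw, hd.symm⟩
    · -- pendant vs pendant
      have hik : i ≠ k := fun h => hne (by rw [h])
      by_cases hi : i = z0
      · have hk : k ≠ z0 := fun h => hik (by rw [hi, h])
        obtain ⟨w, hw, hd⟩ := key2 k i hik.symm hk
        exact ⟨w, hw, hd.symm⟩
      · exact key2 i k hik hi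
  have hmem : n - 1 ∈ {m | ∃ T : Set (Fin n × Option (Fin 1)), T.ncard = m ∧
      IsEdgeMetricGenerator (Cg n) T} := ⟨S, hScard, hSgen⟩
  apply le_antisymm (Nat.sInf_le hmem)
  apply le_csInf ⟨_, hmem⟩
  rintro m ⟨T, rfl, hgen⟩
  by_contra hlt
  push_neg at hlt
  set P : Set (Fin n) := Prod.fst '' T with hP
  have hPle : P.ncard ≤ T.ncard := Set.ncard_image_le (Set.toFinite _)
  have hcompl : 1 < Pᶜ.ncard := by
    have := Set.ncard_add_ncard_compl P
    rw [Nat.card_eq_fintype_card, Fintype.card_fin] at this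
    omega
  obtain ⟨x, y, hx, hy, hxy⟩ := (Set.one_lt_ncard_iff (Set.toFinite _)).mp hcompl
  have he1 : s(((x : Fin n),(none : Option (Fin 1))),(x, some 0)) ∈ (Cg n).edgeSet :=
    (SimpleGraph.mem_edgeSet _).mpr rfl
  have he2 : s(((y : Fin n),(none : Option (Fin 1))),(y, some 0)) ∈ (Cg n).edgeSet :=
    (SimpleGraph.mem_edgeSet _).mpr rfl
  have hnee : s(((x : Fin n),(none : Option (Fin 1))),(x, some 0)) ≠
      s(((y : Fin n),(none : Option (Fin 1))),(y, some 0)) := by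
    intro h
    rcases Sym2.eq_iff.mp h with ⟨h1, -⟩ | ⟨h1, -⟩
    · exact hxy (congrArg Prod.fst h1)
    · simp at h1
  obtain ⟨w, hw, hwd⟩ := hgen _ he1 _ he2 hnee
  apply hwd
  have hwx : w.1 ≠ x := fun h => hx ⟨w, hw, h⟩
  have hwy : w.1 ≠ y := fun h => hy ⟨w, hw, h⟩
  have hmap : ∀ u v : Fin n × Option (Fin 1),
      (Cg n).Adj ((Equiv.swap x y).prodCongr (Equiv.refl (Option (Fin 1))) u)
        ((Equiv.swap x y).prodCongr (Equiv.refl (Option (Fin 1))) v) ↔ (Cg n).Adj u v := by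
    rintro ⟨i, _ | a⟩ ⟨j, _ | b⟩ <;>
      simp only [Equiv.prodCongr_apply, Prod.map_apply, Equiv.refl_apply]
    · rw [cadj_cc, cadj_cc, ne_eq, (Equiv.swap x y).injective.eq_iff, ne_eq]
    · rw [cadj_cp, cadj_cp, (Equiv.swap x y).injective.eq_iff]
    · rw [cadj_pc, cadj_pc, (Equiv.swap x y).injective.eq_iff]
    · exact iff_of_false (cadj_pp _ _ _ _) (cadj_pp _ _ _ _)
  let σ : Cg n ≃g Cg n := ⟨(Equiv.swap x y).prodCongr (Equiv.refl (Option (Fin 1))), hmap _ _⟩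
  have hσw : σ w = w := by
    show ((Equiv.swap x y) w.1, w.2) = w
    rw [Equiv.swap_apply_of_ne_of_ne hwx hwy]
  have hσx : ∀ c : Option (Fin 1), σ (x, c) = (y, c) := by
    intro c
    show ((Equiv.swap x y) x, c) = (y, c)
    rw [Equiv.swap_apply_left]
  have h1 : (Cg n).edist w (y, (none : Option (Fin 1))) = (Cg n).edist w (x, none) := by
    have h := edist_iso' σ w (x, (none : Option (Fin 1)))
    rwa [hσw, hσx] at h
  have h2 : (Cg n).edist w (y, some (0 : Fin 1)) = (Cg n).edist w (x, some 0) := by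
    have h := edist_iso' σ w (x, some (0 : Fin 1))
    rwa [hσw, hσx] at h
  show min _ _ = min _ _
  rw [h1, h2]

end CoronaHelpers


theorem edim_corona_complete_K1 (n : ℕ) (hn : 3 ≤ n) :
    edim (corona (⊤ : SimpleGraph (Fin n)) (⊥ : SimpleGraph (Fin 1))) = n - 1 ∧
    edim (⊤ : SimpleGraph (Fin n)) = n - 1 := by
  exact ⟨edim_corona_fin n hn, edim_top_fin n hn⟩
end
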